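/- Let R, P, T, n be positive integers with P ≥ 1, let γ > 0, σ > 0, let b : Fin P → {−1, 1} be a fixed payload with i-th bit b_i, and let c_i ∈ {−1,1}^R be a fixed spreading code. Let the entries of the R × (P−1) matrix C_{¬i} be independent random variables, each uniform on {−1, 1}, and let w̃ ∈ ℝ^R be a random vector, independent of C_{¬i}, whose components are independent centered Gaussians of variance T·n·σ². Define the normalized decoding statistic y = (1/(T·γ·R)) · ( T·γ·R·b_i + T·γ·(c_iᵀ C_{¬i} b_{¬i}) + c_iᵀ w̃ ), where b_{¬i} ∈ {−1,1}^{P−1} is the payload with the i-th entry removed. Then the expectation of y equals b_i and the variance of y equals (P−1)/R + n·σ²/(T·R·γ²). -/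

import Mathlib

open MeasureTheory ProbabilityTheory

/-- The uniform distribution on `{−1, 1} ⊂ ℝ`. -/
noncomputable def pmOneMeasure : Measure ℝ :=
  (2 : ENNReal)⁻¹ • Measure.dirac (-1 : ℝ) + (2 : ENNReal)⁻¹ • Measure.dirac (1 : ℝ)

section Aux

open Real
open scoped NNReal ENNReal

namespace FedCommAux

/-! ### Auxiliary integrals -/

lemma integrable_sq_mul_exp_neg_mul_sq {b : ℝ} (hb : 0 < b) :
    Integrable (fun x : ℝ => x ^ 2 * Real.exp (-b * x ^ 2)) := by
  have h := integrable_rpow_mul_exp_neg_mul_sq hb (s := 2) (by norm_num)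
  refine h.congr (Filter.Eventually.of_forall fun x => ?_)
  have : x ^ (2:ℝ) = x ^ (2:ℕ) := by
    rw [← Real.rpow_natCast x 2]; norm_num
  simp only [this]

lemma integral_sq_mul_exp_neg_mul_sq {b : ℝ} (hb : 0 < b) :
    ∫ x : ℝ, x ^ 2 * Real.exp (-b * x ^ 2) = Real.sqrt (π / b) / (2 * b) := by
  have hderiv : ∀ x : ℝ, HasDerivAt (fun x : ℝ => x * Real.exp (-b * x ^ 2))
      (Real.exp (-b * x ^ 2) - 2 * b * (x ^ 2 * Real.exp (-b * x ^ 2))) x := by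
    intro x
    have h1 : HasDerivAt (fun x : ℝ => -b * x ^ 2) (-b * (2 * x)) x := by
      simpa using ((hasDerivAt_pow 2 x).const_mul (-b))
    have h : HasDerivAt (fun y : ℝ => y * Real.exp (-b * y ^ 2))
        (1 * Real.exp (-b * x ^ 2) + x * (Real.exp (-b * x ^ 2) * (-b * (2 * x)))) x :=
      (hasDerivAt_id x).mul h1.exp
    convert h using 1
    ring
  have hf : Integrable (fun x : ℝ => x * Real.exp (-b * x ^ 2)) :=
    integrable_mul_exp_neg_mul_sq hb
  have hg := integrable_sq_mul_exp_neg_mul_sq hb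
  have hexp : Integrable (fun x : ℝ => Real.exp (-b * x ^ 2)) :=
    integrable_exp_neg_mul_sq hb
  have h0 : ∫ x : ℝ, (Real.exp (-b * x ^ 2) - 2 * b * (x ^ 2 * Real.exp (-b * x ^ 2))) = 0 :=
    integral_eq_zero_of_hasDerivAt_of_integrable hderiv
      (hexp.sub ((hg.const_mul (2 * b)))) hf
  rw [integral_sub hexp (hg.const_mul (2 * b)), MeasureTheory.integral_const_mul,
    integral_gaussian] at h0
  have hb' : (2 * b) ≠ 0 := by positivity
  field_simp at h0 ⊢
  linarith

/-! ### Gaussian moments -/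

lemma gaussianReal_integral_eq {v : ℝ≥0} (hv : v ≠ 0) (g : ℝ → ℝ) :
    ∫ x, g x ∂(gaussianReal 0 v) = ∫ x, gaussianPDFReal 0 v x * g x := by
  rw [gaussianReal_of_var_ne_zero _ hv]
  have hd : gaussianPDF 0 v = fun x => ((Real.toNNReal (gaussianPDFReal 0 v x)) : ℝ≥0∞) := rfl
  rw [hd, integral_withDensity_eq_integral_smul
    ((measurable_gaussianPDFReal 0 v).real_toNNReal) g]
  congr 1; funext x
  rw [NNReal.smul_def, Real.coe_toNNReal _ (gaussianPDFReal_nonneg 0 v x)]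
  rfl

lemma gaussianReal_integrable_iff {v : ℝ≥0} (hv : v ≠ 0) (g : ℝ → ℝ) :
    Integrable g (gaussianReal 0 v) ↔
      Integrable (fun x => gaussianPDFReal 0 v x * g x) := by
  rw [gaussianReal_of_var_ne_zero _ hv]
  have hd : gaussianPDF 0 v = fun x => ((Real.toNNReal (gaussianPDFReal 0 v x)) : ℝ≥0∞) := rfl
  rw [hd, integrable_withDensity_iff_integrable_smul
    ((measurable_gaussianPDFReal 0 v).real_toNNReal)]
  have he : ∀ x, (Real.toNNReal (gaussianPDFReal 0 v x)) • g x
      = gaussianPDFReal 0 v x * g x := fun x => by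
    rw [NNReal.smul_def, Real.coe_toNNReal _ (gaussianPDFReal_nonneg 0 v x)]
    rfl
  constructor <;> intro h <;> refine h.congr (Filter.Eventually.of_forall fun x => ?_) <;>
    simp only [he]

lemma gaussianPDFReal_zero_eq (v : ℝ≥0) (x : ℝ) :
    gaussianPDFReal 0 v x
      = (Real.sqrt (2 * π * (v:ℝ)))⁻¹ * Real.exp (-(2 * (v:ℝ))⁻¹ * x ^ 2) := by
  rw [gaussianPDFReal]
  rw [sub_zero]
  ring_nf

lemma gaussianReal_mean_zero {v : ℝ≥0} (hv : v ≠ 0) :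
    ∫ x, x ∂(gaussianReal 0 v) = 0 := by
  rw [gaussianReal_integral_eq hv]
  have heq : ∀ x : ℝ, gaussianPDFReal 0 v (-x) * (-x)
      = -(gaussianPDFReal 0 v x * x) := fun x => by
    simp only [gaussianPDFReal_zero_eq, neg_sq]; ring
  have h1 := MeasureTheory.integral_neg_eq_self
    (fun x : ℝ => gaussianPDFReal 0 v x * x) volume
  have h2 : (∫ x : ℝ, gaussianPDFReal 0 v (-x) * (-x))
      = -∫ x : ℝ, gaussianPDFReal 0 v x * x := by
    simp only [heq]
    rw [integral_neg]
  rw [h1] at h2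
  linarith

lemma coe_pos_of_ne {v : ℝ≥0} (hv : v ≠ 0) : 0 < (v : ℝ) := by
  exact_mod_cast pos_iff_ne_zero.mpr hv

lemma gaussianReal_integrable_id {v : ℝ≥0} (hv : v ≠ 0) :
    Integrable (fun x => x) (gaussianReal 0 v) := by
  rw [gaussianReal_integrable_iff hv]
  have hb : 0 < (2 * (v:ℝ))⁻¹ := by
    have := coe_pos_of_ne hv; positivity
  have h := (integrable_mul_exp_neg_mul_sq hb).const_mul (Real.sqrt (2 * π * (v:ℝ)))⁻¹
  refine h.congr (Filter.Eventually.of_forall fun x => ?_)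
  simp only [gaussianPDFReal_zero_eq]
  ring

lemma gaussianReal_integrable_sq {v : ℝ≥0} (hv : v ≠ 0) :
    Integrable (fun x => x ^ 2) (gaussianReal 0 v) := by
  rw [gaussianReal_integrable_iff hv]
  have hb : 0 < (2 * (v:ℝ))⁻¹ := by
    have := coe_pos_of_ne hv; positivity
  have h := (integrable_sq_mul_exp_neg_mul_sq hb).const_mul (Real.sqrt (2 * π * (v:ℝ)))⁻¹
  refine h.congr (Filter.Eventually.of_forall fun x => ?_)
  simp only [gaussianPDFReal_zero_eq]
  ring

lemma gaussianReal_memLp2 {v : ℝ≥0} (hv : v ≠ 0) :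
    MemLp id 2 (gaussianReal 0 v) := by
  rw [memLp_two_iff_integrable_sq aestronglyMeasurable_id]
  exact gaussianReal_integrable_sq hv

lemma gaussianReal_sq_moment {v : ℝ≥0} (hv : v ≠ 0) :
    ∫ x, x ^ 2 ∂(gaussianReal 0 v) = (v : ℝ) := by
  have hvpos := coe_pos_of_ne hv
  have hb : 0 < (2 * (v:ℝ))⁻¹ := by positivity
  rw [gaussianReal_integral_eq hv]
  have heq : ∀ x : ℝ, gaussianPDFReal 0 v x * x ^ 2
      = (Real.sqrt (2 * π * (v:ℝ)))⁻¹ * (x ^ 2 * Real.exp (-(2 * (v:ℝ))⁻¹ * x ^ 2)) :=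
    fun x => by rw [gaussianPDFReal_zero_eq]; ring
  simp only [heq]
  rw [MeasureTheory.integral_const_mul, integral_sq_mul_exp_neg_mul_sq hb]
  have h1 : π / (2 * (v:ℝ))⁻¹ = 2 * π * (v:ℝ) := by
    field_simp
  rw [h1]
  have h2 : Real.sqrt (2 * π * (v:ℝ)) ≠ 0 := by
    have : 0 < 2 * π * (v:ℝ) := by positivity
    positivity
  field_simp

/-! ### pmOneMeasure facts -/

lemma integrable_dirac'' (g : ℝ → ℝ) (a : ℝ) : Integrable g (Measure.dirac a) := by
  have hnull : (Measure.dirac a) {x : ℝ | ¬ g x = g a} = 0 := by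
    rw [Measure.dirac_apply]
    simp [Set.indicator_apply]
  have hae : g =ᵐ[Measure.dirac a] fun _ => g a := by
    rw [Filter.EventuallyEq, ae_iff]
    exact hnull
  exact (integrable_const (g a)).congr hae.symm

instance : IsProbabilityMeasure pmOneMeasure := by
  constructor
  rw [pmOneMeasure]
  simp [ENNReal.inv_two_add_inv_two]

lemma pmOne_integrable (g : ℝ → ℝ) : Integrable g pmOneMeasure := by
  rw [pmOneMeasure]
  refine Integrable.add_measure ?_ ?_ <;>
    exact (integrable_dirac'' g _).smul_measure (by norm_num)

lemma pmOne_integral (g : ℝ → ℝ) :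
    ∫ x, g x ∂pmOneMeasure = 2⁻¹ * g (-1) + 2⁻¹ * g 1 := by
  rw [pmOneMeasure, integral_add_measure
    ((integrable_dirac'' g _).smul_measure (by norm_num))
    ((integrable_dirac'' g _).smul_measure (by norm_num)),
    integral_smul_measure, integral_smul_measure, integral_dirac, integral_dirac]
  norm_num

lemma pmOne_memLp2 : MemLp id 2 pmOneMeasure := by
  refine MemLp.of_bound aestronglyMeasurable_id 1 ?_
  rw [ae_iff]
  rw [pmOneMeasure]
  have h1 : ¬ ¬ ‖(-1:ℝ)‖ ≤ 1 := by norm_num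
  have h2 : ¬ ¬ ‖(1:ℝ)‖ ≤ 1 := by norm_num
  simp only [Measure.add_apply, Measure.smul_apply, smul_eq_mul]
  rw [Measure.dirac_apply, Measure.dirac_apply]
  simp [Set.indicator_apply, h1, h2]

/-! ### variance helpers -/

variable {Ω : Type*} [MeasurableSpace Ω] {μ : Measure Ω}

lemma variance_const_add [IsProbabilityMeasure μ] (k : ℝ) {X : Ω → ℝ} (hX : MemLp X 2 μ) :
    variance (fun ω => k + X ω) μ = variance X μ := by
  have hXk : MemLp (fun ω => k + X ω) 2 μ := (memLp_const k).add hX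
  rw [variance_eq_sub hXk, variance_eq_sub hX]
  have hint : Integrable X μ := hX.integrable one_le_two
  have hsq : Integrable (fun ω => X ω ^ 2) μ := by
    simpa [pow_two] using hX.integrable_sq
  have h1 : μ[fun ω => k + X ω] = k + μ[X] := by
    rw [integral_add (integrable_const k) hint, integral_const]
    simp
  have h2 : μ[(fun ω => k + X ω) ^ 2] = k ^ 2 + 2 * k * μ[X] + μ[X ^ 2] := by
    have heq : ((fun ω => k + X ω) ^ 2) = fun ω => k ^ 2 + (2 * k * X ω + X ω ^ 2) := by
      funext ω; simp [pow_two]; ring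
    have ha : Integrable (fun ω => 2 * k * X ω + X ω ^ 2) μ := (hint.const_mul _).add hsq
    have hXsq : μ[X ^ 2] = ∫ ω, X ω ^ 2 ∂μ := rfl
    calc μ[(fun ω => k + X ω) ^ 2]
        = ∫ ω, (k ^ 2 + (2 * k * X ω + X ω ^ 2)) ∂μ := by rw [heq]
      _ = k ^ 2 + ∫ ω, (2 * k * X ω + X ω ^ 2) ∂μ := by
          rw [integral_add (integrable_const _) ha]; simp
      _ = k ^ 2 + (2 * k * ∫ ω, X ω ∂μ) + ∫ ω, X ω ^ 2 ∂μ := by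
          rw [integral_add (hint.const_mul _) hsq, MeasureTheory.integral_const_mul]
          ring
      _ = k ^ 2 + 2 * k * μ[X] + μ[X ^ 2] := by rw [← hXsq]
  rw [h1, h2]
  ring

end FedCommAux

end Aux

open FedCommAux Real
open scoped NNReal ENNReal

/-- FedComm Theorem 1, part 1: writing the payload length as `P = Pm1 + 1 ≥ 1`,
let `b : Fin P → {−1,1}` be the payload with `i`-th bit `b i`, `c ∈ {−1,1}^R`
the spreading code of bit `i`, the entries of the `R × (P−1)` matrix `C_{¬i}`
(given by `f ∘ Sum.inl`) independent uniform on `{−1,1}`, and the gradient-noise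
vector `w̃` (given by `f ∘ Sum.inr`) independent of `C_{¬i}` with independent
`N(0, T·n·σ²)` components.  The normalized decoding statistic
`y = (1/(T·γ·R))·(T·γ·R·b_i + T·γ·(cᵀ C_{¬i} b_{¬i}) + cᵀ w̃)`,
where `b_{¬i} = b ∘ i.succAbove` is the payload with the `i`-th entry removed,
has mean `b i` and variance `(P−1)/R + n·σ²/(T·R·γ²)`. -/
theorem fedcomm_decoding_statistic_mean_variance
    (R T n Pm1 : ℕ) (hR : 0 < R) (hT : 0 < T) (hn : 0 < n)
    (γ σ : ℝ) (hγ : 0 < γ) (hσ : 0 < σ)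
    (b : Fin (Pm1 + 1) → ℝ) (hb : ∀ k, b k = 1 ∨ b k = -1) (i : Fin (Pm1 + 1))
    (c : Fin R → ℝ) (hc : ∀ j, c j = 1 ∨ c j = -1)
    {Ω : Type*} [MeasurableSpace Ω] (μ : Measure Ω) [IsProbabilityMeasure μ]
    (f : (Fin R × Fin Pm1) ⊕ Fin R → Ω → ℝ) (hmeas : ∀ a, Measurable (f a))
    (hindep : iIndepFun f μ)
    (hlawC : ∀ p : Fin R × Fin Pm1, Measure.map (f (Sum.inl p)) μ = pmOneMeasure)
    (hlawW : ∀ j : Fin R, Measure.map (f (Sum.inr j)) μ =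
      gaussianReal 0 (Real.toNNReal ((T : ℝ) * (n : ℝ) * σ ^ 2))) :
    (μ[fun ω => (1 / ((T : ℝ) * γ * R)) *
        ((T : ℝ) * γ * R * b i
          + (T : ℝ) * γ * (∑ j : Fin R, ∑ k : Fin Pm1,
              c j * f (Sum.inl (j, k)) ω * b (i.succAbove k))
          + ∑ j : Fin R, c j * f (Sum.inr j) ω)] = b i) ∧
      variance (fun ω => (1 / ((T : ℝ) * γ * R)) *
        ((T : ℝ) * γ * R * b i
          + (T : ℝ) * γ * (∑ j : Fin R, ∑ k : Fin Pm1,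
              c j * f (Sum.inl (j, k)) ω * b (i.succAbove k))
          + ∑ j : Fin R, c j * f (Sum.inr j) ω)) μ =
        (((Pm1 : ℝ) + 1) - 1) / R + (n : ℝ) * σ ^ 2 / ((T : ℝ) * R * γ ^ 2) := by
  classical
  have hT' : (0:ℝ) < T := by exact_mod_cast hT
  have hR' : (0:ℝ) < R := by exact_mod_cast hR
  have hn' : (0:ℝ) < n := by exact_mod_cast hn
  have hTγR : ((T:ℝ) * γ * R) ≠ 0 := by positivity
  set v : ℝ≥0 := Real.toNNReal ((T : ℝ) * (n : ℝ) * σ ^ 2) with hvdef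
  have hvco : (v:ℝ) = (T:ℝ) * n * σ ^ 2 := Real.coe_toNNReal _ (by positivity)
  have hv : v ≠ 0 := by
    intro h
    have h0 : ((T:ℝ) * n * σ ^ 2) = 0 := by
      rw [← hvco, h]; simp
    have : (0:ℝ) < (T:ℝ) * n * σ ^ 2 := by positivity
    linarith
  set lam : (Fin R × Fin Pm1) ⊕ Fin R → ℝ :=
    Sum.elim (fun p => c p.1 * b (i.succAbove p.2) / R)
      (fun j => c j / ((T:ℝ) * γ * R)) with hlam
  have hfun : (fun ω => (1 / ((T : ℝ) * γ * R)) *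
        ((T : ℝ) * γ * R * b i
          + (T : ℝ) * γ * (∑ j : Fin R, ∑ k : Fin Pm1,
              c j * f (Sum.inl (j, k)) ω * b (i.succAbove k))
          + ∑ j : Fin R, c j * f (Sum.inr j) ω))
      = fun ω => b i + ∑ a, lam a * f a ω := by
    funext ω
    have hγ' : γ ≠ 0 := ne_of_gt hγ
    have hT'' : (T:ℝ) ≠ 0 := ne_of_gt hT'
    have hR'' : (R:ℝ) ≠ 0 := ne_of_gt hR'
    have e1 : ∑ p : Fin R × Fin Pm1, lam (Sum.inl p) * f (Sum.inl p) ω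
        = (1/(R:ℝ)) * ∑ j : Fin R, ∑ k : Fin Pm1,
            c j * f (Sum.inl (j, k)) ω * b (i.succAbove k) := by
      rw [Fintype.sum_prod_type, Finset.mul_sum]
      refine Finset.sum_congr rfl fun j _ => ?_
      rw [Finset.mul_sum]
      refine Finset.sum_congr rfl fun k _ => ?_
      simp only [hlam, Sum.elim_inl]
      ring
    have e2 : ∑ j : Fin R, lam (Sum.inr j) * f (Sum.inr j) ω
        = (1/((T:ℝ) * γ * R)) * ∑ j : Fin R, c j * f (Sum.inr j) ω := by
      rw [Finset.mul_sum]
      refine Finset.sum_congr rfl fun j _ => ?_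
      simp only [hlam, Sum.elim_inr]
      ring
    rw [Fintype.sum_sum_type, e1, e2]
    field_simp
    ring
  -- moment facts for each coordinate
  have hmem : ∀ a, MemLp (f a) 2 μ := by
    intro a
    have h : MemLp id 2 (Measure.map (f a) μ) := by
      cases a with
      | inl p => rw [hlawC]; exact pmOne_memLp2
      | inr j => rw [hlawW]; exact gaussianReal_memLp2 hv
    exact (memLp_map_measure_iff aestronglyMeasurable_id (hmeas a).aemeasurable).mp h
  have hint : ∀ a, Integrable (f a) μ := fun a => (hmem a).integrable one_le_two
  have hEf : ∀ a, ∫ ω, f a ω ∂μ = 0 := by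
    intro a
    have h : ∫ ω, f a ω ∂μ = ∫ x, x ∂(Measure.map (f a) μ) :=
      (integral_map (hmeas a).aemeasurable aestronglyMeasurable_id).symm
    rw [h]
    cases a with
    | inl p =>
        rw [hlawC, pmOne_integral (fun x => x)]
        norm_num
    | inr j =>
        rw [hlawW]
        exact gaussianReal_mean_zero hv
  have hE2 : ∀ a, μ[(f a) ^ 2] = Sum.elim (fun _ => (1:ℝ)) (fun _ => (v:ℝ)) a := by
    intro a
    have h : μ[(f a) ^ 2] = ∫ x, x ^ 2 ∂(Measure.map (f a) μ) := by
      rw [integral_map (hmeas a).aemeasurable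
        (by fun_prop : AEStronglyMeasurable (fun x : ℝ => x ^ 2) (Measure.map (f a) μ))]
      simp [Pi.pow_apply]
    rw [h]
    cases a with
    | inl p =>
        rw [hlawC, pmOne_integral (fun x => x ^ 2)]
        norm_num
    | inr j =>
        rw [hlawW]
        simpa using gaussianReal_sq_moment hv
  have hvar : ∀ a, variance (f a) μ = Sum.elim (fun _ => (1:ℝ)) (fun _ => (v:ℝ)) a := by
    intro a
    rw [variance_eq_sub (hmem a), hE2 a]
    have : μ[f a] = 0 := hEf a
    rw [this]
    simp
  refine ⟨?_, ?_⟩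
  · rw [hfun]
    rw [integral_add (integrable_const _)
      (integrable_finset_sum _ fun a _ => (hint a).const_mul _)]
    rw [integral_finset_sum _ fun a _ => (hint a).const_mul _]
    have hz : ∀ a ∈ Finset.univ, ∫ ω, lam a * f a ω ∂μ = 0 := fun a _ => by
      rw [MeasureTheory.integral_const_mul, hEf a, mul_zero]
    rw [Finset.sum_congr rfl hz]
    simp
  · rw [hfun]
    have hXmem : ∀ a ∈ Finset.univ,
        MemLp (fun ω => lam a * f a ω) 2 μ := fun a _ => (hmem a).const_mul _
    have hpair : Set.Pairwise ↑(Finset.univ : Finset ((Fin R × Fin Pm1) ⊕ Fin R))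
        fun a a' => IndepFun (fun ω => lam a * f a ω) (fun ω => lam a' * f a' ω) μ := by
      intro a _ a' _ hne
      exact (hindep.indepFun hne).comp
        (measurable_const_mul (lam a)) (measurable_const_mul (lam a'))
    have hsum : (fun ω => ∑ a, lam a * f a ω)
        = ∑ a, (fun ω => lam a * f a ω) := by
      funext ω; simp
    have hXs : MemLp (fun ω => ∑ a, lam a * f a ω) 2 μ := by
      rw [hsum]
      exact memLp_finset_sum' _ fun a _ => (hmem a).const_mul _
    rw [variance_const_add (b i) hXs, hsum,
      IndepFun.variance_sum hXmem hpair]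
    have hterm : ∀ a ∈ Finset.univ, variance (fun ω => lam a * f a ω) μ
        = lam a ^ 2 * (Sum.elim (fun _ => (1:ℝ)) (fun _ => (v:ℝ)) a) := fun a _ => by
      rw [variance_const_mul (lam a) (f a) μ, hvar a]
    rw [Finset.sum_congr rfl hterm, Fintype.sum_sum_type]
    have hc2 : ∀ j, c j ^ 2 = 1 := fun j => by
      rcases hc j with h | h <;> rw [h] <;> norm_num
    have hb2 : ∀ k, b k ^ 2 = 1 := fun k => by
      rcases hb k with h | h <;> rw [h] <;> norm_num
    have h1 : ∀ p : Fin R × Fin Pm1,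
        lam (Sum.inl p) ^ 2 * (Sum.elim (fun _ => (1:ℝ)) (fun _ => (v:ℝ)) (Sum.inl p : (Fin R × Fin Pm1) ⊕ Fin R))
          = 1 / (R:ℝ) ^ 2 := fun p => by
      simp only [hlam, Sum.elim_inl]
      rw [div_pow, mul_pow, hc2, hb2]
      norm_num
    have h2 : ∀ j : Fin R,
        lam (Sum.inr j) ^ 2 * (Sum.elim (fun _ => (1:ℝ)) (fun _ => (v:ℝ)) (Sum.inr j : (Fin R × Fin Pm1) ⊕ Fin R))
          = (v:ℝ) / ((T:ℝ) * γ * R) ^ 2 := fun j => by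
      simp only [hlam, Sum.elim_inr]
      rw [div_pow, hc2]
      ring
    simp only [h1, h2, Finset.sum_const, Finset.card_univ, Fintype.card_prod,
      Fintype.card_fin, nsmul_eq_mul, Nat.cast_mul]
    rw [hvco]
    have hγ' : γ ≠ 0 := ne_of_gt hγ
    have hσ' : σ ≠ 0 := ne_of_gt hσ
    have hT'' : (T:ℝ) ≠ 0 := ne_of_gt hT'
    have hR'' : (R:ℝ) ≠ 0 := ne_of_gt hR'
    field_simp
    ring
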